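/- A set partition σ of [n] avoids the pattern 1/234 if and only if its RGF w has the form uv, where u = 1^{a_1}2 (a block of 1s followed by a single 2, or u is all 1s when m=1), and in the suffix v the letter 2 appears at most once more and every other letter i (i = 1 or i ≥ 3) appears at most twice. -/

import Mathlib

/-- `w` is a restricted growth function: each letter is at least 1 and at most
one more than the maximum of the preceding letters (so the first letter is 1). -/
def IsRGF (w : List ℕ) : Prop :=
  ∀ i : Fin w.length, 1 ≤ w.get i ∧ w.get i ≤ ((w.take i.1).foldr max 0) + 1

/-- left-smaller statistic -/
def lsStat (w : List ℕ) : ℕ :=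
  ∑ i : Fin w.length, ((w.take i.1).toFinset.filter (fun v => v < w.get i)).card

/-- left-bigger statistic -/
def lbStat (w : List ℕ) : ℕ :=
  ∑ i : Fin w.length, ((w.take i.1).toFinset.filter (fun v => w.get i < v)).card

/-- right-smaller statistic -/
def rsStat (w : List ℕ) : ℕ :=
  ∑ i : Fin w.length, ((w.drop (i.1 + 1)).toFinset.filter (fun v => v < w.get i)).card

/-- right-bigger statistic -/
def rbStat (w : List ℕ) : ℕ :=
  ∑ i : Fin w.length, ((w.drop (i.1 + 1)).toFinset.filter (fun v => w.get i < v)).card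

/-- The word `w` (viewed as a set partition via block indices) contains the
pattern given by the RGF `p`: some subsequence of `w` has the same
same-block (equal-letter) relation as `p`. -/
def WContains (p w : List ℕ) : Prop :=
  ∃ f : Fin p.length → Fin w.length, StrictMono f ∧
    ∀ a b : Fin p.length, w.get (f a) = w.get (f b) ↔ p.get a = p.get b

lemma wcontains_iff (w : List ℕ) :
    WContains [1,2,2,2] w ↔ ∃ x y : ℕ, y ≠ x ∧ List.Sublist [y,x,x,x] w := by
  constructor
  · rintro ⟨f, hmono, hiff⟩
    set i0 : Fin ([1,2,2,2] : List ℕ).length := ⟨0, by decide⟩ with hi0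
    set i1 : Fin ([1,2,2,2] : List ℕ).length := ⟨1, by decide⟩ with hi1
    set i2 : Fin ([1,2,2,2] : List ℕ).length := ⟨2, by decide⟩ with hi2
    set i3 : Fin ([1,2,2,2] : List ℕ).length := ⟨3, by decide⟩ with hi3
    refine ⟨w.get (f i1), w.get (f i0), ?_, ?_⟩
    · intro h
      have h2 := (hiff i0 i1).mp h
      simp [hi0, hi1] at h2
    · rw [List.sublist_iff_exists_fin_orderEmbedding_get_eq]
      refine ⟨OrderEmbedding.ofStrictMono (fun i => f ⟨i.1, i.2⟩)
        (fun a b hab => hmono (show (⟨a.1, a.2⟩ : Fin ([1,2,2,2] : List ℕ).length) < ⟨b.1, b.2⟩ from hab)), ?_⟩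
      intro ix
      fin_cases ix
      · rfl
      · rfl
      · exact (hiff i1 i2).mpr rfl
      · exact (hiff i1 i3).mpr rfl
  · rintro ⟨x, y, hne, hsub⟩
    rw [List.sublist_iff_exists_fin_orderEmbedding_get_eq] at hsub
    obtain ⟨f, hf⟩ := hsub
    refine ⟨fun i => f ⟨i.1, i.2⟩, fun a b hab => f.strictMono
      (show (⟨a.1, a.2⟩ : Fin ([y,x,x,x] : List ℕ).length) < ⟨b.1, b.2⟩ from hab), ?_⟩
    have h0 : w.get (f ⟨0, by simp⟩) = y := (hf ⟨0, by simp⟩).symm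
    have h1 : w.get (f ⟨1, by simp⟩) = x := (hf ⟨1, by simp⟩).symm
    have h2 : w.get (f ⟨2, by simp⟩) = x := (hf ⟨2, by simp⟩).symm
    have h3 : w.get (f ⟨3, by simp⟩) = x := (hf ⟨3, by simp⟩).symm
    intro a b
    fin_cases a <;> fin_cases b <;>
      simp only [h0, h1, h2, h3] <;> simp [hne, Ne.symm hne] <;> decide

lemma foldr_max_replicate_one (m : ℕ) : List.foldr max 0 (List.replicate m 1) ≤ 1 := by
  induction m with
  | zero => simp
  | succ n ih => simpa [List.replicate_succ] using ih

theorem stmt8 (w : List ℕ) (hw : IsRGF w) :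
    ¬ WContains [1, 2, 2, 2] w ↔
      ((∀ x ∈ w, x = 1) ∨
        ∃ a v : List ℕ, ∃ a₁ : ℕ, a = List.replicate a₁ 1 ∧
          w = a ++ [2] ++ v ∧ v.count 2 ≤ 1 ∧ ∀ i : ℕ, i ≠ 2 → v.count i ≤ 2) := by
  rw [wcontains_iff]
  constructor
  · intro hnc
    by_cases hall : ∀ x ∈ w, x = 1
    · exact Or.inl hall
    · right
      push_neg at hall
      obtain ⟨x0, hx0mem, hx0⟩ := hall
      set t := w.takeWhile (fun z => z == 1) with ht
      set d := w.dropWhile (fun z => z == 1) with hd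
      have hw_eq : t ++ d = w := List.takeWhile_append_dropWhile ..
      have htall : ∀ z ∈ t, z = 1 := by
        intro z hz
        rw [ht] at hz
        have hp := List.mem_takeWhile_imp hz
        exact eq_of_beq hp
      have htrep : t = List.replicate t.length 1 :=
        List.eq_replicate_length.mpr htall
      have hdne : d ≠ [] := by
        intro h
        exact hx0 (htall x0 (by rwa [← hw_eq, h, List.append_nil] at hx0mem))
      obtain ⟨c, tl, hctl⟩ := List.exists_cons_of_ne_nil hdne
      have hcne1 : c ≠ 1 := by
        have hh := List.head?_dropWhile_not (fun z => z == 1) w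
        rw [← hd, hctl] at hh
        simpa using hh
      obtain ⟨m, hm⟩ : ∃ m, m = t.length := ⟨_, rfl⟩
      have hmlt : m < w.length := by
        rw [← hw_eq, hctl, hm]; simp
      have hget : w[m]'hmlt = c := by
        rw [List.getElem_eq_iff, ← hw_eq, hm]
        rw [List.getElem?_append_right (le_refl t.length)]
        simp [hctl]
      have htake : w.take m = t := by
        rw [← hw_eq, hm]; exact List.take_left (l₁ := t) (l₂ := d)
      have hrgf := hw ⟨m, hmlt⟩
      simp only [List.get_eq_getElem] at hrgf
      rw [hget] at hrgf
      have hfold : (w.take m).foldr max 0 ≤ 1 := by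
        rw [htake, htrep]; exact foldr_max_replicate_one _
      have hc2 : c = 2 := by omega
      have hm1 : 1 ≤ m := by
        by_contra h
        push_neg at h
        have hm0 : m = 0 := by omega
        subst hm0
        have h0 := hw ⟨0, hmlt⟩
        simp only [List.get_eq_getElem, Fin.val_mk] at h0
        rw [hget] at h0
        simp at h0
        omega
      have hwform : w = List.replicate m 1 ++ [2] ++ tl := by
        rw [← hw_eq, hctl, htrep, hc2, ← hm]; simp
      refine ⟨List.replicate m 1, tl, m, rfl, hwform, ?_, ?_⟩
      · by_contra hcnt
        push_neg at hcnt
        apply hnc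
        refine ⟨2, 1, by norm_num, ?_⟩
        have hsub2 : List.Sublist (List.replicate 2 2) tl :=
          List.replicate_sublist_iff.mpr hcnt
        have h1 : List.Sublist [1] (List.replicate m 1) := by
          have : [1] = List.replicate 1 1 := rfl
          rw [this]
          exact (List.replicate_sublist_replicate 1).mpr hm1
        have hs : List.Sublist ([1] ++ (2 :: List.replicate 2 2))
            (List.replicate m 1 ++ (2 :: tl)) :=
          List.Sublist.append h1 (hsub2.cons₂ 2)
        rw [hwform, List.append_assoc]
        exact hs
      · intro i hi
        by_contra hcnt
        push_neg at hcnt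
        apply hnc
        refine ⟨i, 2, Ne.symm hi, ?_⟩
        have hsub3 : List.Sublist (List.replicate 3 i) tl :=
          List.replicate_sublist_iff.mpr hcnt
        rw [hwform, List.append_assoc]
        exact ((hsub3.cons₂ 2).trans
          (List.sublist_append_right (List.replicate m 1) (2 :: tl)))
  · rintro (hall | ⟨a, v, a₁, ha, hweq, h2, hi⟩) ⟨x, y, hne, hsub⟩
    · have hy : y = 1 := hall y (hsub.subset (by simp))
      have hx : x = 1 := hall x (hsub.subset (by simp))
      exact hne (hy.trans hx.symm)
    · subst ha hweq
      have hcnt : 3 ≤ List.count x ((List.replicate a₁ 1 ++ [2]) ++ v) := by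
        have := hsub.count_le x
        simpa [List.count_cons, hne] using this
      rw [List.count_append, List.count_append, List.count_replicate] at hcnt
      by_cases hx2 : x = 2
      · subst hx2
        simp at hcnt
        omega
      · by_cases hx1 : x = 1
        · subst hx1
          rw [List.append_assoc] at hsub
          rw [List.sublist_append_iff] at hsub
          obtain ⟨l₁, l₂, heq, hsl₁, hsl₂⟩ := hsub
          have hl₁all : ∀ z ∈ l₁, z = 1 := fun z hz =>
            List.eq_of_mem_replicate (hsl₁.subset hz)
          have h111 : List.Sublist [1, 1, 1] v := by
            cases l₁ with
            | cons z l₁' =>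
              rw [List.cons_append] at heq
              injection heq with hyz _
              exact absurd (hyz.trans (hl₁all z (by simp))) hne
            | nil =>
              simp only [List.nil_append] at heq
              rw [← heq] at hsl₂
              cases hsl₂ with
              | cons a h => exact (List.sublist_cons_self y [1,1,1]).trans h
              | cons_cons a h => exact h
          have hcv := h111.count_le 1
          have hc1 := hi 1 (by norm_num)
          simp at hcv
          omega
        · have hcv := hi x hx2
          simp [List.count_singleton, Ne.symm hx1, Ne.symm hx2] at hcnt
          omega
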